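/- Let δ ≥ 0, θ ∈ (0, π/2), λ ≥ 1, and let Y be a random variable with density p*₂,δ(y) = λ·(φ(y)/Φ(δ))·∫_{−∞}^{(δ − y sin θ)/cos θ} φ(u)·F₁,δ(u)^{λ−1} du. Then E[Y] < 0. -/

import Mathlib

open MeasureTheory ProbabilityTheory Real Set Filter

noncomputable def phi (x : ℝ) : ℝ := Real.exp (-x^2/2) / Real.sqrt (2*Real.pi)
noncomputable def Phi (x : ℝ) : ℝ := ∫ u in Set.Iic x, phi u
noncomputable def pdelta (θ δ : ℝ) (z : ℝ × ℝ) : ℝ :=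
  phi z.1 * phi z.2 * Set.indicator (Set.Ici (0:ℝ)) (fun _ => 1)
    (δ - z.1 * Real.cos θ - z.2 * Real.sin θ) / Phi δ
noncomputable def p1 (θ δ x : ℝ) : ℝ :=
  phi x * Phi ((δ - x * Real.cos θ) / Real.sin θ) / Phi δ
noncomputable def F1 (θ δ x : ℝ) : ℝ := ∫ u in Set.Iic x, p1 θ δ u
noncomputable def pstar (lam : ℕ) (θ δ : ℝ) (z : ℝ × ℝ) : ℝ :=
  (lam : ℝ) * pdelta θ δ z * F1 θ δ z.1 ^ (lam - 1)
noncomputable def p1star (lam : ℕ) (θ δ x : ℝ) : ℝ :=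
  (lam : ℝ) * p1 θ δ x * F1 θ δ x ^ (lam - 1)
noncomputable def p2star (lam : ℕ) (θ δ y : ℝ) : ℝ :=
  (lam : ℝ) * (phi y / Phi δ) *
    ∫ u in Set.Iic ((δ - y * Real.sin θ) / Real.cos θ), phi u * F1 θ δ u ^ (lam - 1)


lemma phi_pos (x : ℝ) : 0 < phi x :=
  div_pos (Real.exp_pos _) (Real.sqrt_pos.2 (by positivity))

lemma phi_neg (x : ℝ) : phi (-x) = phi x := by simp [phi]

lemma measurable_phi : Measurable phi := by
  unfold phi; fun_prop

lemma integrable_phi : Integrable phi := by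
  have h : Integrable (fun x : ℝ => Real.exp (-(1/2:ℝ) * x ^ 2)) :=
    integrable_exp_neg_mul_sq (by norm_num)
  have : phi = fun x => Real.exp (-(1/2:ℝ) * x ^ 2) * (Real.sqrt (2*Real.pi))⁻¹ := by
    funext x; rw [phi, div_eq_mul_inv]; ring_nf
  rw [this]; exact h.mul_const _

lemma integral_phi : ∫ x, phi x = 1 := by
  have h := integral_gaussian (1/2 : ℝ)
  have h2 : Real.pi / (1/2 : ℝ) = 2 * Real.pi := by ring
  rw [h2] at h
  have : ∫ x, phi x = (∫ x, Real.exp (-(1/2:ℝ) * x ^ 2)) / Real.sqrt (2*Real.pi) := by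
    rw [← integral_div]; congr 1; funext x; rw [phi]; ring_nf
  rw [this, h, div_self]
  exact (Real.sqrt_pos.2 (by positivity)).ne'

lemma my_setIntegral_pos {f : ℝ → ℝ} {s : Set ℝ} (hf : ∀ x, 0 < f x)
    (hfi : IntegrableOn f s) (hs : 0 < volume s) : 0 < ∫ x in s, f x := by
  rw [setIntegral_pos_iff_support_of_nonneg_ae (ae_of_all _ fun x => (hf x).le) hfi]
  have h : Function.support f = univ := eq_univ_of_forall fun x => (hf x).ne'
  rwa [h, univ_inter]

lemma Phi_pos (x : ℝ) : 0 < Phi x :=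
  my_setIntegral_pos phi_pos integrable_phi.integrableOn (by simp [Real.volume_Iic])

lemma Phi_le_one (x : ℝ) : Phi x ≤ 1 := by
  rw [← integral_phi]
  exact setIntegral_le_integral integrable_phi (ae_of_all _ fun y => (phi_pos y).le)

lemma monotone_Phi : Monotone Phi := fun a b hab =>
  setIntegral_mono_set integrable_phi.integrableOn
    (ae_of_all _ fun y => (phi_pos y).le) (HasSubset.Subset.eventuallyLE (Iic_subset_Iic.2 hab))

lemma measurable_Phi : Measurable Phi := monotone_Phi.measurable

section

variable (θ δ : ℝ)

lemma p1_pos (x : ℝ) : 0 < p1 θ δ x :=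
  div_pos (mul_pos (phi_pos x) (Phi_pos _)) (Phi_pos δ)

lemma p1_le (x : ℝ) : p1 θ δ x ≤ phi x * (Phi δ)⁻¹ := by
  rw [p1, div_eq_mul_inv]
  gcongr
  · exact inv_nonneg.2 (Phi_pos δ).le
  · exact mul_le_of_le_one_right (phi_pos x).le (Phi_le_one _)

lemma measurable_p1 : Measurable (p1 θ δ) := by
  apply Measurable.div _ measurable_const
  exact measurable_phi.mul (measurable_Phi.comp (by fun_prop))

lemma integrable_p1 : Integrable (p1 θ δ) := by
  apply (integrable_phi.mul_const (Phi δ)⁻¹).mono' (measurable_p1 θ δ).aestronglyMeasurable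
  refine ae_of_all _ fun x => ?_
  rw [Real.norm_eq_abs, abs_of_pos (p1_pos θ δ x)]
  exact p1_le θ δ x

lemma F1_pos (x : ℝ) : 0 < F1 θ δ x :=
  my_setIntegral_pos (p1_pos θ δ) (integrable_p1 θ δ).integrableOn (by simp [Real.volume_Iic])

lemma F1_le (x : ℝ) : F1 θ δ x ≤ (Phi δ)⁻¹ := by
  calc F1 θ δ x ≤ ∫ u, p1 θ δ u :=
        setIntegral_le_integral (integrable_p1 θ δ) (ae_of_all _ fun y => (p1_pos θ δ y).le)
    _ ≤ ∫ u, phi u * (Phi δ)⁻¹ :=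
        integral_mono (integrable_p1 θ δ) (integrable_phi.mul_const _) (p1_le θ δ)
    _ = (Phi δ)⁻¹ := by rw [MeasureTheory.integral_mul_const, integral_phi, one_mul]

variable (lam : ℕ)

noncomputable def gg (u : ℝ) : ℝ := phi u * F1 θ δ u ^ (lam - 1)
noncomputable def G (t : ℝ) : ℝ := ∫ u in Set.Iic t, gg θ δ lam u

lemma gg_pos (u : ℝ) : 0 < gg θ δ lam u :=
  mul_pos (phi_pos u) (pow_pos (F1_pos θ δ u) _)

lemma gg_le (u : ℝ) : gg θ δ lam u ≤ phi u * ((Phi δ)⁻¹) ^ (lam - 1) := by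
  rw [gg]
  gcongr
  · exact (phi_pos u).le
  · exact (F1_pos θ δ u).le
  · exact F1_le θ δ u

lemma measurable_F1 : Measurable (F1 θ δ) := by
  have : Monotone (F1 θ δ) := fun a b hab =>
    setIntegral_mono_set (integrable_p1 θ δ).integrableOn
      (ae_of_all _ fun y => (p1_pos θ δ y).le)
      (HasSubset.Subset.eventuallyLE (Iic_subset_Iic.2 hab))
  exact this.measurable

lemma measurable_gg : Measurable (gg θ δ lam) :=
  measurable_phi.mul ((measurable_F1 θ δ).pow_const _)

lemma integrable_gg : Integrable (gg θ δ lam) := by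
  apply (integrable_phi.mul_const (((Phi δ)⁻¹) ^ (lam - 1))).mono'
    (measurable_gg θ δ lam).aestronglyMeasurable
  refine ae_of_all _ fun x => ?_
  rw [Real.norm_eq_abs, abs_of_pos (gg_pos θ δ lam x)]
  exact gg_le θ δ lam x

lemma G_strictMono : StrictMono (G θ δ lam) := by
  intro t1 t2 h
  have hu : Set.Iic t2 = Set.Iic t1 ∪ Set.Ioc t1 t2 := (Iic_union_Ioc_eq_Iic h.le).symm
  rw [G, G, hu, setIntegral_union (Iic_disjoint_Ioc le_rfl) measurableSet_Ioc
    (integrable_gg θ δ lam).integrableOn (integrable_gg θ δ lam).integrableOn]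
  have hpos : 0 < ∫ u in Set.Ioc t1 t2, gg θ δ lam u :=
    my_setIntegral_pos (gg_pos θ δ lam) (integrable_gg θ δ lam).integrableOn
      (by rw [Real.volume_Ioc]; simp [h, sub_pos.2 h])
  linarith

lemma G_nonneg (t : ℝ) : 0 ≤ G θ δ lam t :=
  (my_setIntegral_pos (gg_pos θ δ lam) (integrable_gg θ δ lam).integrableOn
      (by simp [Real.volume_Iic])).le

lemma G_le (t : ℝ) : G θ δ lam t ≤ ((Phi δ)⁻¹) ^ (lam - 1) := by
  calc G θ δ lam t ≤ ∫ u, gg θ δ lam u :=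
        setIntegral_le_integral (integrable_gg θ δ lam) (ae_of_all _ fun y => (gg_pos θ δ lam y).le)
    _ ≤ ∫ u, phi u * ((Phi δ)⁻¹) ^ (lam - 1) :=
        integral_mono (integrable_gg θ δ lam) (integrable_phi.mul_const _) (gg_le θ δ lam)
    _ = _ := by rw [MeasureTheory.integral_mul_const, integral_phi, one_mul]

lemma measurable_G : Measurable (G θ δ lam) := by
  have : Monotone (G θ δ lam) := (G_strictMono θ δ lam).monotone
  exact this.measurable

end

lemma integrable_id_mul_phi : Integrable (fun x : ℝ => x * phi x) := by
  have h : Integrable (fun x : ℝ => x * Real.exp (-(1/2:ℝ) * x ^ 2)) :=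
    integrable_mul_exp_neg_mul_sq (by norm_num)
  have : (fun x : ℝ => x * phi x)
      = fun x => x * Real.exp (-(1/2:ℝ) * x ^ 2) * (Real.sqrt (2*Real.pi))⁻¹ := by
    funext x; rw [phi, div_eq_mul_inv]; ring_nf
  rw [this]; exact h.mul_const _

lemma integrable_abs_mul_phi : Integrable (fun x : ℝ => |x| * phi x) := by
  have := integrable_id_mul_phi.abs
  simpa [abs_mul, abs_of_pos (phi_pos _)] using this

/-- a random variable Y with density p*₂,δ has E[Y] < 0. -/
theorem stmt8
    {Ω : Type*} [MeasurableSpace Ω] (P : Measure Ω) [IsProbabilityMeasure P]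
    (lam : ℕ) (hlam : 1 ≤ lam) (θ δ : ℝ)
    (hθ : θ ∈ Set.Ioo 0 (Real.pi/2)) (hδ : 0 ≤ δ)
    (Y : Ω → ℝ) (hYm : Measurable Y)
    (hYlaw : Measure.map Y P
      = volume.withDensity (fun y => ENNReal.ofReal (p2star lam θ δ y))) :
    (∫ ω, Y ω ∂P) < 0 := by
  obtain ⟨hθ0, hθ2⟩ := hθ
  have hpi := Real.pi_pos
  have hsin : 0 < Real.sin θ := Real.sin_pos_of_pos_of_lt_pi hθ0 (by linarith)
  have hcos : 0 < Real.cos θ := Real.cos_pos_of_mem_Ioo ⟨by linarith, hθ2⟩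
  have hlam' : (0:ℝ) < (lam:ℝ) := by exact_mod_cast hlam
  set D : ℝ → ℝ := fun y => p2star lam θ δ y with hDdef
  have hDG : ∀ y, D y = (lam:ℝ) * (phi y / Phi δ)
      * G θ δ lam ((δ - y * Real.sin θ) / Real.cos θ) := fun y => rfl
  have hDmeas : Measurable D := by
    apply Measurable.mul
    · exact (measurable_const.mul (measurable_phi.div measurable_const))
    · exact (measurable_G θ δ lam).comp (by fun_prop)
  have hDnonneg : ∀ y, 0 ≤ D y := fun y => by
    rw [hDG]
    have := Phi_pos δ
    have := phi_pos y
    have := G_nonneg θ δ lam ((δ - y * Real.sin θ) / Real.cos θ)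
    positivity
  -- the key pointwise strict inequality
  have hkey : ∀ y : ℝ, 0 < y → D y < D (-y) := by
    intro y hy
    rw [hDG, hDG, phi_neg]
    have ht : (δ - y * Real.sin θ) / Real.cos θ < (δ - -y * Real.sin θ) / Real.cos θ := by
      apply div_lt_div_of_pos_right ?_ hcos
      nlinarith
    have hG := G_strictMono θ δ lam ht
    have hfac : 0 < (lam:ℝ) * (phi y / Phi δ) :=
      mul_pos hlam' (div_pos (phi_pos y) (Phi_pos δ))
    exact mul_lt_mul_of_pos_left hG hfac
  -- integrability of y ↦ D y * y
  set K : ℝ := (lam:ℝ) * (Phi δ)⁻¹ * ((Phi δ)⁻¹) ^ (lam - 1) with hKdef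
  have hK : 0 ≤ K := by
    have := (Phi_pos δ)
    positivity
  set f : ℝ → ℝ := fun y => D y * y with hfdef
  have hfi : Integrable f := by
    apply Integrable.mono' ((integrable_abs_mul_phi.const_mul K))
      ((hDmeas.mul measurable_id).aestronglyMeasurable)
    refine ae_of_all _ fun y => ?_
    have hΦ := Phi_pos δ
    rw [Real.norm_eq_abs, Pi.mul_apply, id_eq, abs_mul, abs_of_nonneg (hDnonneg y)]
    calc D y * |y| ≤ ((lam:ℝ) * (phi y / Phi δ) * ((Phi δ)⁻¹) ^ (lam - 1)) * |y| := by
          gcongr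
          · rw [hDG]
            gcongr
            · have := phi_pos y; positivity
            · exact G_le θ δ lam _
      _ = K * (|y| * phi y) := by rw [hKdef]; field_simp
  -- rewrite the expectation
  have h1 : (∫ ω, Y ω ∂P) = ∫ y, D y * y := by
    have h2 : (∫ ω, Y ω ∂P) = ∫ y, y ∂(Measure.map Y P) :=
      (integral_map hYm.aemeasurable aestronglyMeasurable_id).symm
    rw [h2, hYlaw]
    have h3 : (fun y => ENNReal.ofReal (D y)) = fun y => ((D y).toNNReal : ENNReal) := rfl
    rw [h3, integral_withDensity_eq_integral_smul (hDmeas.real_toNNReal) (fun y : ℝ => y)]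
    congr 1
    funext y
    rw [NNReal.smul_def, smul_eq_mul, Real.coe_toNNReal _ (hDnonneg y)]
  rw [h1]
  -- split the integral
  have hsplit : (∫ y, D y * y)
      = (∫ y in Set.Iic (0:ℝ), f y) + ∫ y in Set.Ioi (0:ℝ), f y :=
    (intervalIntegral.integral_Iic_add_Ioi hfi.integrableOn hfi.integrableOn).symm
  have hneg : (∫ y in Set.Iic (0:ℝ), f y) = ∫ y in Set.Ioi (0:ℝ), f (-y) := by
    have h4 := integral_comp_neg_Ioi 0 f
    rw [neg_zero] at h4
    exact h4.symm
  have hint_neg : IntegrableOn (fun y => f (-y)) (Set.Ioi (0:ℝ)) :=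
    hfi.comp_neg.integrableOn
  have hcomb : (∫ y in Set.Ioi (0:ℝ), f (-y)) + ∫ y in Set.Ioi (0:ℝ), f y
      = ∫ y in Set.Ioi (0:ℝ), (f (-y) + f y) :=
    (integral_add hint_neg hfi.integrableOn).symm
  rw [hsplit, hneg, hcomb]
  have hpos : 0 < ∫ y in Set.Ioi (0:ℝ), (-(f (-y) + f y)) := by
    rw [setIntegral_pos_iff_support_of_nonneg_ae]
    · refine lt_of_lt_of_le ?_ (measure_mono (subset_inter ?_ subset_rfl))
      · rw [Real.volume_Ioi]; exact ENNReal.zero_lt_top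
      · intro y hy
        have hy' : 0 < y := hy
        have h6 := hkey y hy'
        have h5 : 0 < -(f (-y) + f y) := by
          show 0 < -(D (-y) * (-y) + D y * y)
          nlinarith
        exact h5.ne'
    · filter_upwards [ae_restrict_mem measurableSet_Ioi] with y hy
      have hy' : 0 < y := hy
      have h6 := hkey y hy'
      show 0 ≤ -(D (-y) * (-y) + D y * y)
      nlinarith
    · exact ((hint_neg.add hfi.integrableOn).neg)
  have := integral_neg (μ := volume.restrict (Set.Ioi (0:ℝ))) (fun y => f (-y) + f y)
  linarith [hpos, this]
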